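/- Let n ≥ 1 and define A : ℝⁿ → ℝⁿ by A(ξ) = a(|ξ|)·ξ for ξ ≠ 0 and A(0) = 0. Then for every τ > 0 and every t with 0 < t ≤ 2τ, there exists θ > 0 such that (A(ξ) − A(η)) · (ξ − η) ≥ θ for all ξ, η ∈ ℝⁿ with |ξ − η| ≥ t, |ξ| ≤ τ and |η| ≤ τ; equivalently, the infimum of (A(ξ) − A(η)) · (ξ − η) over this set is strictly positive. -/

import Mathlib

set_option maxHeartbeats 1000000 in
/-- positive-infimum claim in Step 3 of the proof of Theorem 1.1.
For the vector field `A(ξ) = a(|ξ|)ξ` (with `A(0)=0`), for every `τ > 0` and `0 < t ≤ 2τ`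
there exists `θ > 0` such that `(A(ξ)−A(η))·(ξ−η) ≥ θ` whenever `|ξ−η| ≥ t`, `|ξ| ≤ τ`,
`|η| ≤ τ`. -/
theorem stmt_12 (a a' : ℝ → ℝ) (iA sA : ℝ)
    (hiA : -1 < iA) (hias : iA ≤ sA)
    (ha_pos : ∀ t, 0 < t → 0 < a t)
    (ha_deriv : ∀ t, 0 < t → HasDerivAt a (a' t) t)
    (ha'_cont : ContinuousOn a' (Set.Ioi 0))
    (hbound : ∀ t, 0 < t → iA ≤ t * a' t / a t ∧ t * a' t / a t ≤ sA)
    (n : ℕ) (hn : 1 ≤ n)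
    (A : EuclideanSpace ℝ (Fin n) → EuclideanSpace ℝ (Fin n))
    (hA0 : A 0 = 0)
    (hA : ∀ ξ : EuclideanSpace ℝ (Fin n), ξ ≠ 0 → A ξ = a ‖ξ‖ • ξ) :
    ∀ τ : ℝ, 0 < τ → ∀ t : ℝ, 0 < t → t ≤ 2 * τ →
      ∃ θ : ℝ, 0 < θ ∧
        ∀ ξ η : EuclideanSpace ℝ (Fin n),
          t ≤ ‖ξ - η‖ → ‖ξ‖ ≤ τ → ‖η‖ ≤ τ →
            θ ≤ inner ℝ (A ξ - A η) (ξ - η) := by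
  intro τ hτ t ht htτ
  have hiA1 : (0:ℝ) < 1 + iA := by linarith
  set g : ℝ → ℝ := fun x => a x * x with hgdef
  have hgderiv : ∀ x : ℝ, 0 < x → HasDerivAt g (a' x * x + a x) x := by
    intro x hx
    rw [hgdef]; have h := (ha_deriv x hx).mul (hasDerivAt_id' x); simp only [mul_one] at h; exact h
  have hderiv_lb : ∀ x : ℝ, 0 < x → (1 + iA) * a x ≤ a' x * x + a x := by
    intro x hx
    have h1 := (hbound x hx).1
    have hax := ha_pos x hx
    have h2 : iA * a x ≤ x * a' x := (le_div_iff₀ hax).mp h1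
    nlinarith
  -- MVT-based lower bound
  have mvt : ∀ u v c' : ℝ, 0 < u → u < v → 0 ≤ c' →
      (∀ x ∈ Set.Icc u v, c' ≤ a x) → (1 + iA) * c' * (v - u) ≤ g v - g u := by
    intro u v c' hu huv hc' hbd
    have hcont : ContinuousOn g (Set.Icc u v) := fun x hx =>
      ((hgderiv x (lt_of_lt_of_le hu hx.1)).continuousAt).continuousWithinAt
    obtain ⟨ζ, hζmem, hslope⟩ := exists_hasDerivAt_eq_slope g (fun x => a' x * x + a x)
      huv hcont (fun x hx => hgderiv x (hu.trans hx.1))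
    have hζ0 : 0 < ζ := hu.trans hζmem.1
    have h1 : (1 + iA) * a ζ ≤ a' ζ * ζ + a ζ := hderiv_lb ζ hζ0
    have h2 : c' ≤ a ζ := hbd ζ ⟨hζmem.1.le, hζmem.2.le⟩
    have h3 : (1 + iA) * c' ≤ (g v - g u) / (v - u) := by
      rw [← hslope]; nlinarith
    have hvu : (0:ℝ) < v - u := by linarith
    calc (1 + iA) * c' * (v - u) ≤ ((g v - g u) / (v - u)) * (v - u) := by
          exact mul_le_mul_of_nonneg_right h3 hvu.le
      _ = g v - g u := by field_simp
  have hacont : ∀ u v : ℝ, 0 < u → ContinuousOn a (Set.Icc u v) := fun u v hu x hx =>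
    ((ha_deriv x (lt_of_lt_of_le hu hx.1)).continuousAt).continuousWithinAt
  -- monotonicity of g
  have gmono : ∀ u v : ℝ, 0 < u → u ≤ v → g u ≤ g v := by
    intro u v hu huv
    rcases eq_or_lt_of_le huv with rfl | h
    · exact le_refl _
    · obtain ⟨x₀, hx₀mem, hx₀'⟩ := isCompact_Icc.exists_isMinOn
        (Set.nonempty_Icc.mpr huv) (hacont u v hu)
      have hx₀ := isMinOn_iff.mp hx₀'
      have hx₀pos : 0 < a x₀ := ha_pos x₀ (lt_of_lt_of_le hu hx₀mem.1)
      have := mvt u v (a x₀) hu h hx₀pos.le hx₀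
      have h4 : 0 < (1+iA)*(a x₀)*(v-u) := by
        apply mul_pos (mul_pos hiA1 hx₀pos); linarith
      linarith
  have hgx : ∀ x : ℝ, g x = a x * x := fun x => rfl
  clear_value g
  -- the uniform positive lower bound on a
  set ε : ℝ := min (t/4) (t^2/(8*τ)) with hεdef
  have hε : 0 < ε := lt_min (by linarith) (by positivity)
  have hε2τ : ε < 2*τ := lt_of_le_of_lt (min_le_left _ _) (by linarith)
  obtain ⟨x₀, hx₀mem, hx₀'⟩ := isCompact_Icc.exists_isMinOn
    (Set.nonempty_Icc.mpr hε2τ.le) (hacont ε (2*τ) hε)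
  have hx₀ := isMinOn_iff.mp hx₀'
  set c : ℝ := a x₀ with hcdef
  have hc : 0 < c := ha_pos x₀ (lt_of_lt_of_le hε hx₀mem.1)
  have hca : ∀ x ∈ Set.Icc ε (2*τ), c ≤ a x := hx₀
  have hεt4 : ε ≤ t/4 := min_le_left _ _
  have hεt8 : ε ≤ t^2/(8*τ) := min_le_right _ _
  clear hx₀ hx₀' hx₀mem hcdef hεdef hε2τ
  clear_value c ε
  refine ⟨min ((1 + iA) * c * (t/4) * (t/2)) (c * (t^2/4)), lt_min (by positivity) (by positivity), ?_⟩
  set θ : ℝ := min ((1 + iA) * c * (t/4) * (t/2)) (c * (t^2/4)) with hθdef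
  have hθ1 : θ ≤ (1 + iA) * c * (t/4) * (t/2) := min_le_left _ _
  have hθ2 : θ ≤ c * (t^2/4) := min_le_right _ _
  clear hθdef
  clear_value θ
  -- key lemma assuming both nonzero and ‖η‖ ≤ ‖ξ‖
  have key : ∀ ξ η : EuclideanSpace ℝ (Fin n), ξ ≠ 0 → η ≠ 0 → ‖η‖ ≤ ‖ξ‖ →
      t ≤ ‖ξ - η‖ → ‖ξ‖ ≤ τ → ‖η‖ ≤ τ → θ ≤ inner ℝ (A ξ - A η) (ξ - η) := by
    intro ξ η hξ0 hη0 hsr hdist hξτ hητ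
    set r : ℝ := ‖ξ‖ with hrdef
    set s : ℝ := ‖η‖ with hsdef
    have hr0 : 0 < r := norm_pos_iff.mpr hξ0
    have hs0 : 0 < s := norm_pos_iff.mpr hη0
    set p : ℝ := inner ℝ ξ η with hpdef
    have hcs : p ≤ r * s := real_inner_le_norm ξ η
    have hcs2 : -(r*s) ≤ p := by
      have h := abs_real_inner_le_norm ξ η
      rw [abs_le] at h
      linarith [h.1]
    have hexp : (inner ℝ (A ξ - A η) (ξ - η) : ℝ) = (g r - g s) * (r - s) + (a r + a s) * (r*s - p) := by
      rw [hA ξ hξ0, hA η hη0]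
      simp only [inner_sub_left, inner_sub_right, real_inner_smul_left]
      rw [real_inner_self_eq_norm_sq, real_inner_self_eq_norm_sq]
      have hcomm : (inner ℝ η ξ : ℝ) = p := real_inner_comm ξ η
      rw [hcomm, hgx r, hgx s, hpdef]
      ring
    have h3 : t^2 ≤ r^2 - 2*p + s^2 := by
      have h1 : ‖ξ - η‖^2 = r^2 - 2*p + s^2 := norm_sub_sq_real ξ η
      have h2 : t^2 ≤ ‖ξ - η‖^2 := pow_le_pow_left₀ ht.le hdist 2
      linarith
    clear_value r s p
    have hsq : t^2 ≤ (r - s)^2 + 2*(r*s - p) := by nlinarith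
    rw [hexp]
    have hmono0 : 0 ≤ (g r - g s) * (r - s) :=
      mul_nonneg (by linarith [gmono s r hs0 hsr]) (by linarith)
    by_cases hA4 : t^2/4 ≤ r*s - p
    · -- angular case
      have hrs : t^2/8 ≤ r*s := by nlinarith
      have hrlb : t^2/(8*τ) ≤ r := by
        rw [div_le_iff₀ (by linarith : (0:ℝ) < 8*τ)]
        nlinarith
      have hac : c ≤ a r := hca r ⟨le_trans hεt8 hrlb, by linarith⟩
      have has : 0 < a s := ha_pos s hs0
      have h2 : c * (t^2/4) ≤ (a r + a s) * (r*s - p) := by nlinarith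
      linarith
    · -- radial case
      push_neg at hA4
      have hrs2 : t^2/2 ≤ (r-s)^2 := by nlinarith
      have hgap : t/2 ≤ r - s := by nlinarith [sq_nonneg (r - s - t/2), sq_nonneg (r - s + t/2)]
      have hglb : (1 + iA) * c * (t/4) ≤ g r - g s := by
        by_cases hs4 : t/4 ≤ s
        · have h1 : (1 + iA) * c * (t/2) ≤ g (s + t/2) - g s := by
            have h1' := mvt s (s + t/2) c hs0 (by linarith) hc.le
              (fun x hx => hca x ⟨le_trans hεt4 (le_trans hs4 hx.1), by linarith [hx.2]⟩)
            rw [show s + t/2 - s = t/2 by ring] at h1'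
            exact h1'
          have h2 : g (s + t/2) ≤ g r := gmono (s + t/2) r (by linarith) (by linarith)
          nlinarith
        · push_neg at hs4
          have h1 : (1 + iA) * c * (t/4) ≤ g (t/2) - g (t/4) := by
            have := mvt (t/4) (t/2) c (by linarith) (by linarith) hc.le
              (fun x hx => hca x ⟨le_trans hεt4 hx.1, by linarith [hx.2]⟩)
            nlinarith
          have h2 : g s ≤ g (t/4) := gmono s (t/4) hs0 hs4.le
          have h3 : g (t/2) ≤ g r := gmono (t/2) r (by linarith) (by linarith)
          linarith
      have hterm : (1 + iA) * c * (t/4) * (t/2) ≤ (g r - g s) * (r - s) :=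
        mul_le_mul hglb hgap (by linarith) (by nlinarith [mul_nonneg (mul_nonneg hiA1.le hc.le) (by linarith : (0:ℝ) ≤ t/4)])
      have hterm2 : 0 ≤ (a r + a s) * (r*s - p) :=
        mul_nonneg (by linarith [ha_pos r hr0, ha_pos s hs0]) (by linarith)
      linarith
  -- now the full statement
  intro ξ η hdist hξτ hητ
  by_cases hξ0 : ξ = 0
  · subst hξ0
    have hη0 : η ≠ 0 := by
      intro h; subst h; simp at hdist; linarith
    have hs : t ≤ ‖η‖ := by
      have : ‖(0:EuclideanSpace ℝ (Fin n)) - η‖ = ‖η‖ := by simp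
      linarith [hdist.trans_eq this]
    have hexp : (inner ℝ (A 0 - A η) (0 - η) : ℝ) = a ‖η‖ * ‖η‖^2 := by
      rw [hA0, hA η hη0]
      simp only [zero_sub, inner_neg_neg, real_inner_smul_left, real_inner_self_eq_norm_sq]
    rw [hexp]
    have hac : c ≤ a ‖η‖ := hca ‖η‖ ⟨by linarith, by linarith⟩
    have h1 : t^2 ≤ ‖η‖^2 := pow_le_pow_left₀ ht.le hs 2
    have h2 : c * (t^2/4) ≤ a ‖η‖ * ‖η‖^2 := by
      calc c * (t^2/4) ≤ c * t^2 := mul_le_mul_of_nonneg_left (by linarith [sq_nonneg t, pow_pos ht 2]) hc.le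
        _ ≤ a ‖η‖ * ‖η‖^2 := mul_le_mul hac h1 (by positivity) (by linarith [ha_pos ‖η‖ (by linarith : (0:ℝ) < ‖η‖)])
    linarith
  · by_cases hη0 : η = 0
    · subst hη0
      have hs : t ≤ ‖ξ‖ := by
        have : ‖ξ - (0:EuclideanSpace ℝ (Fin n))‖ = ‖ξ‖ := by simp
        linarith [hdist.trans_eq this]
      have hexp : (inner ℝ (A ξ - A 0) (ξ - 0) : ℝ) = a ‖ξ‖ * ‖ξ‖^2 := by
        rw [hA0, hA ξ hξ0]
        simp only [sub_zero, real_inner_smul_left, real_inner_self_eq_norm_sq]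
      rw [hexp]
      have hac : c ≤ a ‖ξ‖ := hca ‖ξ‖ ⟨by linarith, by linarith⟩
      have h1 : t^2 ≤ ‖ξ‖^2 := pow_le_pow_left₀ ht.le hs 2
      have h2 : c * (t^2/4) ≤ a ‖ξ‖ * ‖ξ‖^2 := by
        calc c * (t^2/4) ≤ c * t^2 := mul_le_mul_of_nonneg_left (by linarith [sq_nonneg t, pow_pos ht 2]) hc.le
          _ ≤ a ‖ξ‖ * ‖ξ‖^2 := mul_le_mul hac h1 (by positivity) (by linarith [ha_pos ‖ξ‖ (by linarith : (0:ℝ) < ‖ξ‖)])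
      linarith
    · rcases le_total ‖η‖ ‖ξ‖ with hle | hle
      · exact key ξ η hξ0 hη0 hle hdist hξτ hητ
      · have hsym : (inner ℝ (A ξ - A η) (ξ - η) : ℝ) = inner ℝ (A η - A ξ) (η - ξ) := by
          rw [← neg_sub (A η) (A ξ), ← neg_sub η ξ, inner_neg_neg]
        rw [hsym]
        have hdist' : t ≤ ‖η - ξ‖ := by rwa [norm_sub_rev]
        exact key η ξ hη0 hξ0 hle hdist' hητ hξτ
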